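/- arXiv:2405.11933 — 2 statements merged into one kernel-verified Lean document; each statement's English description precedes it below -/
import Mathlib

section
/- Let n ≥ 4 be an integer and let a be a complex root of the polynomial equation binom(a, n+2) + binom(n+3-a, n+2) = 0 (interpreting binomial coefficients as polynomials a(a-1)···(a-n-1)/(n+2)!). If n is odd, then a ∈ {2, 3, ..., n+1}. -/
noncomputable def cbinom (x : ℂ) (k : ℕ) : ℂ :=
  (∏ j ∈ Finset.range k, (x - j)) / (Nat.factorial k)

theorem stmt_0 (n : ℕ) (hn : 4 ≤ n) (hodd : Odd n) (a : ℂ)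
    (h : cbinom a (n + 2) + cbinom ((n : ℂ) + 3 - a) (n + 2) = 0) :
    ∃ m : ℕ, 2 ≤ m ∧ m ≤ n + 1 ∧ a = m := by
  have hfac : ((Nat.factorial (n + 2) : ℕ) : ℂ) ≠ 0 := by
    exact_mod_cast (Nat.factorial_ne_zero (n + 2))
  unfold cbinom at h
  rw [← add_div, div_eq_zero_iff] at h
  have hP : (∏ j ∈ Finset.range (n + 2), (a - j)) +
      ∏ j ∈ Finset.range (n + 2), ((n : ℂ) + 3 - a - j) = 0 := h.resolve_right hfac
  -- reflect the second product
  have h2 : ∏ j ∈ Finset.range (n + 2), ((n : ℂ) + 3 - a - j)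
      = - ∏ j ∈ Finset.range (n + 2), (a - ((j : ℂ) + 2)) := by
    rw [← Finset.prod_range_reflect]
    have hcongr : ∀ j ∈ Finset.range (n + 2), ((n : ℂ) + 3 - a - ((n + 2 - 1 - j : ℕ) : ℂ))
        = (-1) * (a - ((j : ℂ) + 2)) := by
      intro j hj
      rw [Finset.mem_range] at hj
      have hc : ((n + 2 - 1 - j : ℕ) : ℂ) = (n : ℂ) + 1 - j := by
        have hj' : j ≤ n + 1 := by omega
        rw [show n + 2 - 1 - j = n + 1 - j from by omega, Nat.cast_sub hj']
        push_cast; ring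
      rw [hc]; ring
    rw [Finset.prod_congr rfl hcongr, Finset.prod_mul_distrib, Finset.prod_const,
      Finset.card_range]
    obtain ⟨k, hk⟩ := hodd
    rw [hk, show 2 * k + 1 + 2 = 2 * (k + 1) + 1 by ring, pow_succ, pow_mul]
    norm_num
  rw [h2] at hP
  -- peel products
  have e1 : ∏ j ∈ Finset.range (n + 2), (a - j)
      = (∏ j ∈ Finset.range n, (a - ((j : ℂ) + 2))) * (a * (a - 1)) := by
    rw [Finset.prod_range_succ', Finset.prod_range_succ']
    have : ∀ j ∈ Finset.range n, (a - ((j + 1 + 1 : ℕ) : ℂ)) = a - ((j : ℂ) + 2) :=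
      fun j _ => by push_cast; ring
    rw [Finset.prod_congr rfl this]
    push_cast; ring
  have e2 : ∏ j ∈ Finset.range (n + 2), (a - ((j : ℂ) + 2))
      = (∏ j ∈ Finset.range n, (a - ((j : ℂ) + 2))) * ((a - ((n : ℂ) + 2)) * (a - ((n : ℂ) + 3))) := by
    rw [Finset.prod_range_succ, Finset.prod_range_succ]
    push_cast
    ring
  rw [e1, e2] at hP
  set M := ∏ j ∈ Finset.range n, (a - ((j : ℂ) + 2)) with hM
  have key : M * (((n : ℂ) + 2) * (2 * a - ((n : ℂ) + 3))) = 0 := by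
    linear_combination hP
  rcases mul_eq_zero.mp key with hM0 | hlin
  · obtain ⟨j, hj, hja⟩ := Finset.prod_eq_zero_iff.mp hM0
    rw [Finset.mem_range] at hj
    refine ⟨j + 2, by omega, by omega, ?_⟩
    push_cast
    linear_combination hja
  · have hn2 : ((n : ℂ) + 2) ≠ 0 := by
      have : ((n + 2 : ℕ) : ℂ) ≠ 0 := Nat.cast_ne_zero.mpr (by omega)
      push_cast at this
      exact this
    have h2a : 2 * a = (n : ℂ) + 3 := by
      rcases mul_eq_zero.mp hlin with h' | h'
      · exact absurd h' hn2
      · linear_combination h'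
    obtain ⟨k, hk⟩ := hodd
    have hnk : (n : ℂ) = 2 * k + 1 := by exact_mod_cast congrArg (Nat.cast : ℕ → ℂ) hk
    refine ⟨k + 2, by omega, by omega, ?_⟩
    push_cast
    linear_combination h2a / 2 + hnk / 2
end

section
/- Let n ≥ 4 be an integer and let a be a complex root of the polynomial equation binom(a-1, n+2) + binom(n+2-a, n+2) = 0 (interpreting binomial coefficients as polynomials). If n is even, then a ∈ {1, 2, ..., n+2}. -/
set_option maxRecDepth 20000 in
theorem stmt_1 (n : ℕ) (hn : 4 ≤ n) (heven : Even n) (a : ℂ)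
    (h : cbinom (a - 1) (n + 2) + cbinom ((n : ℂ) + 2 - a) (n + 2) = 0) :
    ∃ m : ℕ, 1 ≤ m ∧ m ≤ n + 2 ∧ a = m := by
  unfold cbinom at h
  have key : ∏ j ∈ Finset.range (n+2), ((n:ℂ) + 2 - a - j)
      = ∏ j ∈ Finset.range (n+2), (a - 1 - j) := by
    rw [← Finset.prod_range_reflect (fun j => ((n:ℂ) + 2 - a - j)) (n+2)]
    have : ∀ j ∈ Finset.range (n+2),
        ((n:ℂ) + 2 - a - ((n + 2 - 1 - j : ℕ) : ℂ)) = -(a - 1 - j) := by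
      intro j hj
      have hj' : j ≤ n + 1 := by
        simpa [Nat.lt_succ_iff] using Finset.mem_range.mp hj
      rw [show n + 2 - 1 - j = n + 1 - j from rfl, Nat.cast_sub hj']
      push_cast
      ring
    rw [Finset.prod_congr rfl this]
    have he : Even (n + 2) := by
      rcases heven with ⟨k, hk⟩; exact ⟨k + 1, by omega⟩
    have hneg : ∀ x ∈ Finset.range (n+2), -(a - 1 - (x:ℂ)) = (-1) * (a - 1 - x) :=
      fun x _ => (neg_one_mul _).symm
    rw [Finset.prod_congr rfl hneg, Finset.prod_mul_distrib, Finset.prod_const,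
      Finset.card_range, he.neg_one_pow, one_mul]
  rw [key] at h
  have hfac : ((Nat.factorial (n+2) : ℂ)) ≠ 0 := by
    exact_mod_cast Nat.cast_ne_zero.mpr (Nat.factorial_ne_zero (n+2))
  have hP : ∏ j ∈ Finset.range (n+2), (a - 1 - j) = 0 := by
    field_simp at h
    rw [mul_zero] at h
    exact (mul_eq_zero.mp h).resolve_right (by norm_num)
  rw [Finset.prod_eq_zero_iff] at hP
  obtain ⟨j, hj, hja⟩ := hP
  refine ⟨j + 1, by omega, by simpa [Nat.lt_succ_iff] using Finset.mem_range.mp hj, ?_⟩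
  push_cast
  linear_combination hja
end
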